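/- Let a be an irrational real number. Then μ(a) = ν(1,a), i.e. the irrationality exponent of a equals the simultaneous irrationality exponent of the pair (1,a); here both infima may equal +∞, in which case they are equal as extended reals. -/

import Mathlib

/-- The integer lattice `ℤ² ⊂ ℝ²` (Euclidean plane). -/
def intLattice2 : Set (EuclideanSpace ℝ (Fin 2)) :=
  {w | ∀ i, ∃ n : ℤ, w i = (n : ℝ)}

/-- The irrationality exponent
`μ(a) = inf{μ : ∃ C > 0, |a - p/q| > C q^{-μ} for all rationals p/q ≠ a}`,
as an extended real (`inf ∅ = +∞`). -/
noncomputable def irrExp (a : ℝ) : EReal :=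
  sInf ((fun μ : ℝ => (μ : EReal)) ''
    {μ : ℝ | ∃ C : ℝ, 0 < C ∧ ∀ q : ℚ, (q : ℝ) ≠ a →
      C * (q.den : ℝ) ^ (-μ) < |a - (q : ℝ)|})

/-- The simultaneous irrationality exponent
`ν(a₁,a₂) = inf{ν : ∃ C > 0, dist((t a₁, t a₂), ℤ²) > C t^{1-ν} for all t ≥ 1}`,
as an extended real (`inf ∅ = +∞`). -/
noncomputable def simulIrrExp (a₁ a₂ : ℝ) : EReal :=
  sInf ((fun ν : ℝ => (ν : EReal)) ''
    {ν : ℝ | ∃ C : ℝ, 0 < C ∧ ∀ t : ℝ, 1 ≤ t →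
      C * t ^ (1 - ν) < Metric.infDist
        (show EuclideanSpace ℝ (Fin 2) from WithLp.toLp 2 ![t * a₁, t * a₂]) intLattice2})

lemma one_le_of_M (a : ℝ) (ha : Irrational a) (μ C : ℝ) (hC : 0 < C)
    (h : ∀ q : ℚ, (q : ℝ) ≠ a → C * (q.den : ℝ) ^ (-μ) < |a - (q : ℝ)|) : 1 ≤ μ := by
  by_contra hlt
  push_neg at hlt
  set m : ℝ := max μ 0 with hm
  have hm0 : 0 ≤ m := le_max_right _ _
  have hmμ : μ ≤ m := le_max_left _ _
  have hm1 : m < 1 := max_lt hlt one_pos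
  have he : 0 < 1 - m := by linarith
  obtain ⟨n, hn⟩ := exists_nat_gt (max 1 ((1 / (2 * C)) ^ ((1:ℝ) / (1 - m))))
  have hn1 : (1:ℝ) ≤ n := le_trans (le_max_left _ _) hn.le
  have hn0 : (0:ℝ) < n := by linarith
  set q : ℚ := (round ((n : ℝ) * a) : ℚ) / (n : ℚ) with hqdef
  have hq : (q : ℝ) = (round ((n : ℝ) * a) : ℝ) / (n : ℝ) := by
    rw [hqdef]; push_cast; ring
  have hqa : (q : ℝ) ≠ a := fun hh => ha ⟨q, hh⟩
  -- denominator bound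
  have hdvd : ((q.den : ℤ)) ∣ (n : ℤ) := by
    have : q = Rat.divInt (round ((n : ℝ) * a)) (n : ℤ) := by
      rw [Rat.divInt_eq_div, hqdef]; push_cast; ring
    rw [this]
    exact Rat.den_dvd _ _
  have hden : (q.den : ℝ) ≤ (n : ℝ) := by
    have := Int.le_of_dvd (by exact_mod_cast hn0) hdvd
    exact_mod_cast this
  have hden1 : (1:ℝ) ≤ (q.den : ℝ) := by exact_mod_cast q.pos
  -- approximation bound
  have happrox : |a - (q : ℝ)| ≤ 1 / (2 * n) := by
    have heq : a - (q : ℝ) = ((n : ℝ) * a - round ((n : ℝ) * a)) / n := by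
      rw [hq]; field_simp
    rw [heq, abs_div, abs_of_pos hn0]
    calc |(n : ℝ) * a - round ((n : ℝ) * a)| / n ≤ (1/2) / n := by
          gcongr; exact abs_sub_round _
      _ = 1 / (2 * n) := by ring
  -- rpow comparisons
  have hr1 : (n : ℝ) ^ (-m) ≤ (q.den : ℝ) ^ (-m) :=
    Real.rpow_le_rpow_of_nonpos (by linarith) hden (by linarith)
  have hr2 : (q.den : ℝ) ^ (-m) ≤ (q.den : ℝ) ^ (-μ) :=
    Real.rpow_le_rpow_of_exponent_le hden1 (by linarith)
  have hmain : C * (n : ℝ) ^ (-m) < 1 / (2 * n) := by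
    calc C * (n : ℝ) ^ (-m) ≤ C * (q.den : ℝ) ^ (-μ) := by
          apply mul_le_mul_of_nonneg_left (le_trans hr1 hr2) hC.le
      _ < |a - (q : ℝ)| := h q hqa
      _ ≤ 1 / (2 * n) := happrox
  -- contradiction
  set X : ℝ := (n : ℝ) ^ m with hX
  set Y : ℝ := (n : ℝ) ^ (1 - m) with hY
  have hX0 : 0 < X := Real.rpow_pos_of_pos hn0 _
  have hY0 : 0 < Y := Real.rpow_pos_of_pos hn0 _
  have hXY : X * Y = n := by
    rw [hX, hY, ← Real.rpow_add hn0]; simp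
  have hnm : (n : ℝ) ^ (-m) = X⁻¹ := Real.rpow_neg hn0.le m
  have hB : (1 / (2 * C)) ^ ((1:ℝ) / (1 - m)) ≤ (n : ℝ) := le_trans (le_max_right _ _) hn.le
  have hYge : 1 / (2 * C) ≤ Y := by
    have hBnn : (0:ℝ) ≤ 1 / (2 * C) := by positivity
    have := Real.rpow_le_rpow (Real.rpow_nonneg hBnn _) hB he.le
    rwa [← Real.rpow_mul hBnn, one_div_mul_cancel he.ne', Real.rpow_one] at this
  have hY' : (1:ℝ) ≤ 2 * C * Y := by
    rw [div_le_iff₀ (by positivity)] at hYge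
    linarith
  have h2 : C * (2 * n) < X := by
    rw [hnm, ← div_eq_mul_inv] at hmain
    rw [div_lt_div_iff₀ hX0 (by positivity)] at hmain
    linarith
  nlinarith [mul_le_mul_of_nonneg_left hY' hX0.le]

lemma dist_fin2 (x y : EuclideanSpace ℝ (Fin 2)) :
    dist x y = Real.sqrt ((x 0 - y 0)^2 + (x 1 - y 1)^2) := by
  rw [EuclideanSpace.dist_eq, Fin.sum_univ_two, Real.dist_eq, Real.dist_eq, sq_abs, sq_abs]

lemma mem_intLattice2 (m n : ℤ) :
    (show EuclideanSpace ℝ (Fin 2) from WithLp.toLp 2 ![(m:ℝ), (n:ℝ)]) ∈ intLattice2 := by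
  intro i
  fin_cases i
  · exact ⟨m, rfl⟩
  · exact ⟨n, rfl⟩

lemma N_to_M (a : ℝ) (μ C : ℝ) (hC : 0 < C)
    (h : ∀ t : ℝ, 1 ≤ t → C * t ^ (1 - μ) < Metric.infDist
        (show EuclideanSpace ℝ (Fin 2) from WithLp.toLp 2 ![t, t * a]) intLattice2) :
    ∀ q : ℚ, (q : ℝ) ≠ a → C * (q.den : ℝ) ^ (-μ) < |a - (q : ℝ)| := by
  intro q hq
  set d : ℝ := (q.den : ℝ) with hd
  have hd1 : (1:ℝ) ≤ d := by
    have h' : 1 ≤ q.den := q.pos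
    rw [hd]
    exact_mod_cast h'
  have hd0 : (0:ℝ) < d := by linarith
  have h1 := h d hd1
  have hmem := mem_intLattice2 (q.den : ℤ) q.num
  have hcast : ((q.den : ℤ) : ℝ) = d := by push_cast [hd]; ring
  rw [hcast] at hmem
  have h2 : Metric.infDist (show EuclideanSpace ℝ (Fin 2) from WithLp.toLp 2 ![d, d * a]) intLattice2
      ≤ dist (show EuclideanSpace ℝ (Fin 2) from WithLp.toLp 2 ![d, d * a])
          (show EuclideanSpace ℝ (Fin 2) from WithLp.toLp 2 ![d, ((q.num : ℝ))]) :=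
    Metric.infDist_le_dist_of_mem hmem
  have h3 : dist (show EuclideanSpace ℝ (Fin 2) from WithLp.toLp 2 ![d, d * a])
      (show EuclideanSpace ℝ (Fin 2) from WithLp.toLp 2 ![d, ((q.num : ℝ))]) = |d * a - (q.num : ℝ)| := by
    rw [dist_fin2]
    simp [Real.sqrt_sq_eq_abs]
  have hcq : (q : ℝ) = (q.num : ℝ) / d := by rw [hd, Rat.cast_def]
  have h4 : |d * a - (q.num : ℝ)| = d * |a - (q : ℝ)| := by
    have heq : d * a - (q.num : ℝ) = d * (a - (q : ℝ)) := by
      rw [hcq]; field_simp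
    rw [heq, abs_mul, abs_of_pos hd0]
  have h5 : C * d ^ (1 - μ) = d * (C * d ^ (-μ)) := by
    rw [show (1:ℝ) - μ = 1 + (-μ) by ring, Real.rpow_add hd0, Real.rpow_one]
    ring
  have h6 : d * (C * d ^ (-μ)) < d * |a - (q : ℝ)| := by
    rw [← h5, ← h4, ← h3]
    exact lt_of_lt_of_le h1 h2
  exact lt_of_mul_lt_mul_left h6 hd0.le

lemma abs_comp_le_dist (x y : EuclideanSpace ℝ (Fin 2)) (i : Fin 2) :
    |x i - y i| ≤ dist x y := by
  rw [EuclideanSpace.dist_eq]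
  have h1 : |x i - y i| = Real.sqrt (dist (x i) (y i) ^ 2) := by
    rw [Real.sqrt_sq dist_nonneg, Real.dist_eq]
  rw [h1]
  apply Real.sqrt_le_sqrt
  exact Finset.single_le_sum (f := fun j => dist (x j) (y j) ^ 2)
    (fun j _ => sq_nonneg _) (Finset.mem_univ i)

lemma intLattice2_nonempty : intLattice2.Nonempty :=
  ⟨0, fun _ => ⟨0, by simp⟩⟩

lemma M_to_N (a : ℝ) (ha : Irrational a) (μ C : ℝ) (hC : 0 < C) (hμ : 1 ≤ μ)
    (h : ∀ q : ℚ, (q : ℝ) ≠ a → C * (q.den : ℝ) ^ (-μ) < |a - (q : ℝ)|) :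
    ∃ C' : ℝ, 0 < C' ∧ ∀ t : ℝ, 1 ≤ t → C' * t ^ (1 - μ) < Metric.infDist
        (show EuclideanSpace ℝ (Fin 2) from WithLp.toLp 2 ![t, t * a]) intLattice2 := by
  set K : ℝ := min (C * 2 ^ (1 - μ)) 1 with hKdef
  have hK0 : 0 < K := lt_min (by positivity) one_pos
  have hK1 : K ≤ 1 := min_le_right _ _
  have hKC : K ≤ C * 2 ^ (1 - μ) := min_le_left _ _
  set ε : ℝ := K / (2 * (1 + |a|)) with hεdef
  have ha1 : (0:ℝ) < 1 + |a| := by positivity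
  have hε0 : 0 < ε := by positivity
  have hεhalf : ε ≤ 1 / 2 := by
    rw [hεdef, div_le_div_iff₀ (by positivity) (by norm_num)]
    nlinarith [abs_nonneg a]
  have hKε : (1 + |a|) * ε = K / 2 := by
    rw [hεdef]; field_simp
  refine ⟨ε / 2, by positivity, fun t ht => ?_⟩
  have ht0 : (0:ℝ) < t := by linarith
  set T : ℝ := t ^ (1 - μ) with hT
  have hT0 : 0 < T := Real.rpow_pos_of_pos ht0 _
  have hT1 : T ≤ 1 := Real.rpow_le_one_of_one_le_of_nonpos ht (by linarith)
  set x : EuclideanSpace ℝ (Fin 2) := (show EuclideanSpace ℝ (Fin 2) from WithLp.toLp 2 ![t, t * a]) with hx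
  -- main claim: every lattice point is at distance ≥ ε * T from x
  have claim : ∀ w ∈ intLattice2, ε * T ≤ dist x w := by
    intro w hw
    obtain ⟨qI, hq0⟩ := hw 0
    obtain ⟨pI, hp1⟩ := hw 1
    have hx0 : x 0 = t := rfl
    have hx1 : x 1 = t * a := rfl
    have hd0 : |t - (qI : ℝ)| ≤ dist x w := by
      have := abs_comp_le_dist x w 0
      rwa [hx0, hq0] at this
    have hd1 : |t * a - (pI : ℝ)| ≤ dist x w := by
      have := abs_comp_le_dist x w 1
      rwa [hx1, hp1] at this
    rcases le_or_gt (ε * T) |t - (qI : ℝ)| with hcase | hcase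
    · exact le_trans hcase hd0
    · -- near case: qI is close to t
      have hεT : ε * T ≤ 1 / 2 := by
        have h' := mul_le_mul_of_nonneg_left hT1 hε0.le
        rw [mul_one] at h'
        linarith
      have habs := abs_lt.mp hcase
      have hqpos : (0:ℝ) < (qI : ℝ) := by linarith
      have hqZ : 1 ≤ qI := by
        have h' : 0 < qI := by exact_mod_cast hqpos
        omega
      have hq1 : (1:ℝ) ≤ (qI : ℝ) := by exact_mod_cast hqZ
      have hq2t : (qI : ℝ) ≤ 2 * t := by linarith
      set r : ℚ := (pI : ℚ) / (qI : ℚ) with hrdef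
      have hrcast : (r : ℝ) = (pI : ℝ) / (qI : ℝ) := by rw [hrdef]; push_cast; ring
      have hra : (r : ℝ) ≠ a := fun hh => ha ⟨r, hh⟩
      have hdvd : ((r.den : ℤ)) ∣ qI := by
        have h' : r = Rat.divInt pI qI := by rw [Rat.divInt_eq_div, hrdef]
        rw [h']; exact Rat.den_dvd _ _
      have hden : (r.den : ℝ) ≤ (qI : ℝ) := by
        have h' := Int.le_of_dvd (by exact_mod_cast hqpos) hdvd
        exact_mod_cast h'
      have hden0 : (0:ℝ) < (r.den : ℝ) := by exact_mod_cast r.pos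
      have hrp : (qI : ℝ) ^ (-μ) ≤ (r.den : ℝ) ^ (-μ) :=
        Real.rpow_le_rpow_of_nonpos hden0 hden (by linarith)
      have hmain : C * (qI : ℝ) ^ (-μ) < |a - (r : ℝ)| :=
        lt_of_le_of_lt (by apply mul_le_mul_of_nonneg_left hrp hC.le) (h r hra)
      -- multiply by qI
      have hq1mu : (qI : ℝ) ^ (1 - μ) = (qI : ℝ) * (qI : ℝ) ^ (-μ) := by
        rw [show (1:ℝ) - μ = 1 + (-μ) by ring, Real.rpow_add hqpos, Real.rpow_one]
      have habs2 : |(qI : ℝ) * a - (pI : ℝ)| = (qI : ℝ) * |a - (r : ℝ)| := by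
        have heq : (qI : ℝ) * a - (pI : ℝ) = (qI : ℝ) * (a - (r : ℝ)) := by
          rw [hrcast]; field_simp
        rw [heq, abs_mul, abs_of_pos hqpos]
      have h2 : C * (qI : ℝ) ^ (1 - μ) < |(qI : ℝ) * a - (pI : ℝ)| := by
        rw [hq1mu, habs2]
        calc C * ((qI : ℝ) * (qI : ℝ) ^ (-μ)) = (qI : ℝ) * (C * (qI : ℝ) ^ (-μ)) := by ring
          _ < (qI : ℝ) * |a - (r : ℝ)| := mul_lt_mul_of_pos_left hmain hqpos
      have h3 : C * 2 ^ (1 - μ) * T ≤ C * (qI : ℝ) ^ (1 - μ) := by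
        have hle : (2 * t) ^ ((1:ℝ) - μ) ≤ (qI : ℝ) ^ ((1:ℝ) - μ) :=
          Real.rpow_le_rpow_of_nonpos hqpos hq2t (by linarith)
        have hmul : (2 * t) ^ ((1:ℝ) - μ) = 2 ^ ((1:ℝ) - μ) * T := by
          rw [hT, Real.mul_rpow (by norm_num) ht0.le]
        calc C * 2 ^ (1 - μ) * T = C * ((2 * t) ^ ((1:ℝ) - μ)) := by rw [hmul]; ring
          _ ≤ C * (qI : ℝ) ^ ((1:ℝ) - μ) := mul_le_mul_of_nonneg_left hle hC.le
      have h4 : |(qI : ℝ) * a - (pI : ℝ)| - |a| * |t - (qI : ℝ)| ≤ |t * a - (pI : ℝ)| := by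
        have h' : |(qI : ℝ) * a - (pI : ℝ)| ≤ |t * a - (pI : ℝ)| + |a| * |t - (qI : ℝ)| := by
          calc |(qI : ℝ) * a - (pI : ℝ)| = |(t * a - (pI : ℝ)) - a * (t - (qI : ℝ))| := by
                congr 1; ring
            _ ≤ |t * a - (pI : ℝ)| + |a * (t - (qI : ℝ))| := abs_sub _ _
            _ = |t * a - (pI : ℝ)| + |a| * |t - (qI : ℝ)| := by rw [abs_mul]
        linarith
      -- combine
      have hA : |a| * |t - (qI : ℝ)| ≤ |a| * (ε * T) :=
        mul_le_mul_of_nonneg_left hcase.le (abs_nonneg a)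
      have hKT : K * T ≤ C * 2 ^ (1 - μ) * T := mul_le_mul_of_nonneg_right hKC hT0.le
      have hbig : K * T < |(qI : ℝ) * a - (pI : ℝ)| := lt_of_le_of_lt (hKT.trans h3) h2
      have hsplit : ε * T + |a| * (ε * T) + (K / 2) * T = K * T := by
        linear_combination T * hKε
      have hKTpos : 0 ≤ (K / 2) * T := by positivity
      have hfin : ε * T ≤ |t * a - (pI : ℝ)| := by linarith
      exact le_trans hfin hd1
  -- conclude
  have hge : ε * T ≤ Metric.infDist x intLattice2 := by
    by_contra hcon
    push_neg at hcon
    obtain ⟨w, hw, hdw⟩ := (Metric.infDist_lt_iff intLattice2_nonempty).mp hcon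
    exact absurd (claim w hw) (not_le.mpr hdw)
  calc ε / 2 * T < ε * T := mul_lt_mul_of_pos_right (half_lt_self hε0) hT0
    _ ≤ Metric.infDist x intLattice2 := hge

/-- for an irrational real number `a`, the irrationality exponent
of `a` equals the simultaneous irrationality exponent of the pair `(1, a)`. -/
theorem irrExp_eq_simulIrrExp_one (a : ℝ) (ha : Irrational a) :
    irrExp a = simulIrrExp 1 a := by
  have hset : {μ : ℝ | ∃ C : ℝ, 0 < C ∧ ∀ q : ℚ, (q : ℝ) ≠ a →
        C * (q.den : ℝ) ^ (-μ) < |a - (q : ℝ)|}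
      = {ν : ℝ | ∃ C : ℝ, 0 < C ∧ ∀ t : ℝ, 1 ≤ t →
        C * t ^ (1 - ν) < Metric.infDist
          (show EuclideanSpace ℝ (Fin 2) from WithLp.toLp 2 ![t * 1, t * a]) intLattice2} := by
    ext μ
    simp only [Set.mem_setOf_eq, mul_one]
    constructor
    · rintro ⟨C, hC, h⟩
      exact M_to_N a ha μ C hC (one_le_of_M a ha μ C hC h) h
    · rintro ⟨C, hC, h⟩
      exact ⟨C, hC, N_to_M a μ C hC h⟩
  unfold irrExp simulIrrExp
  rw [hset]
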